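/- Let A_{I_m} and A_{I_n} be dihedral Artin groups with even labels m and n, let w be a common vertex generator, and form the Artin group A_Γ of the tree Γ consisting of two edges sharing the vertex w, so A_Γ = A_{I_m} ∗_{⟨w⟩} A_{I_n}. Then A_Γ is normally poly-free. -/

import Mathlib

universe u v

/-- Poly-free with a subnormal chain of length `n` (length at most `n`,
since successive subgroups may coincide): there is a chain
`1 = G₀ ⊴ G₁ ⊴ ⋯ ⊴ Gₙ = G` with each quotient `Gᵢ₊₁/Gᵢ` a free group. -/
def IsPolyFreeOfLen : ℕ → (G : Type u) → [Group G] → Prop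
  | 0, G, _ => Subsingleton G
  | n + 1, G, _ => ∃ (N : Subgroup G) (_ : N.Normal),
      IsPolyFreeOfLen n N ∧ IsFreeGroup (G ⧸ N)

/-- A group is poly-free if it admits a subnormal chain with free quotients. -/
def IsPolyFree (G : Type u) [Group G] : Prop := ∃ n, IsPolyFreeOfLen n G

/-- Normally poly-free with a chain of length `n`: a chain
`1 = G₀ ≤ G₁ ≤ ⋯ ≤ Gₙ = G` with every `Gᵢ` normal in `G` and every quotient
`Gᵢ₊₁/Gᵢ` a free group (expressed via a surjection onto a free group whose
kernel is the previous term). -/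
def IsNormallyPolyFreeOfLen (n : ℕ) (G : Type u) [Group G] : Prop :=
  ∃ c : Fin (n + 1) → Subgroup G,
    c 0 = ⊥ ∧ c (Fin.last n) = ⊤ ∧ (∀ i : Fin n, c i.castSucc ≤ c i.succ) ∧
    (∀ i, (c i).Normal) ∧
    ∀ i : Fin n, ∃ (F : Type u) (_ : Group F) (f : ↥(c i.succ) →* F),
      IsFreeGroup F ∧ Function.Surjective f ∧
      f.ker = (c i.castSucc).subgroupOf (c i.succ)

/-- A group is normally poly-free if it admits such a chain of some length. -/
def IsNormallyPolyFree (G : Type u) [Group G] : Prop :=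
  ∃ n, IsNormallyPolyFreeOfLen n G


/-- The alternating product `x * y * x * ⋯` of length `n`. -/
def altProd {M : Type*} [Monoid M] (x y : M) : ℕ → M
  | 0 => 1
  | n + 1 => x * altProd y x n

/-- The dihedral Artin group with label `n`:
`⟨x, y ∣ ⟨x,y⟩ⁿ = ⟨y,x⟩ⁿ⟩` where `⟨x,y⟩ⁿ` is the alternating product of length `n`,
with `x = FreeGroup.of true`, `y = FreeGroup.of false`. -/
abbrev DihedralArtin (n : ℕ) : Type :=
  PresentedGroup
    ({altProd (FreeGroup.of true) (FreeGroup.of false) n *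
        (altProd (FreeGroup.of false) (FreeGroup.of true) n)⁻¹} : Set (FreeGroup Bool))


/-- The Artin group of the tree with two edges sharing a vertex `w` (vertex `1`),
with even labels `m` on the edge `(0,1)` and `n` on the edge `(1,2)`, i.e. the
amalgamated product `A_(I_m) ∗_⟨w⟩ A_(I_n)` of the two dihedral Artin groups over
the cyclic subgroup generated by the common vertex. -/
abbrev TwoEdgeTreeArtin (m n : ℕ) : Type :=
  PresentedGroup
    ({altProd (FreeGroup.of (0 : Fin 3)) (FreeGroup.of 1) m *
        (altProd (FreeGroup.of (1 : Fin 3)) (FreeGroup.of 0) m)⁻¹,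
      altProd (FreeGroup.of (1 : Fin 3)) (FreeGroup.of 2) n *
        (altProd (FreeGroup.of (2 : Fin 3)) (FreeGroup.of 1) n)⁻¹} :
      Set (FreeGroup (Fin 3)))

namespace NPF

lemma mzFree : IsFreeGroup (Multiplicative ℤ) :=
  IsFreeGroup.ofUniqueLift Unit (fun _ => Multiplicative.ofAdd 1) (fun {G} _ f =>
    ⟨zpowersHom G (f ()), by simp, fun g hg => MonoidHom.ext_mint (by simpa using hg ())⟩)

variable {M : Type*} [Monoid M] {N' : Type*} [Monoid N'] {H : Type*} [Group H]

def pr (s : ℕ → M) (i len : ℕ) : M := ((List.range len).map fun j => s (i+j)).prod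

@[simp] lemma pr_zero (s : ℕ → M) (i : ℕ) : pr s i 0 = 1 := rfl

lemma pr_succ (s : ℕ → M) (i len : ℕ) : pr s i (len+1) = pr s i len * s (i+len) := by
  simp [pr, List.range_succ]

lemma pr_cons (s : ℕ → M) (i len : ℕ) : pr s i (len+1) = s i * pr s (i+1) len := by
  induction len with
  | zero => simp [pr_succ]
  | succ p ih =>
      rw [pr_succ, ih, mul_assoc, show i+(p+1) = (i+1)+p by omega, ← pr_succ]

lemma pr_congr {s t : ℕ → M} {i i' len : ℕ} (h : ∀ j, j < len → s (i+j) = t (i'+j)) :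
    pr s i len = pr t i' len := by
  induction len with
  | zero => rfl
  | succ p ih =>
      rw [pr_succ, pr_succ, ih (fun j hj => h j (by omega)), h p (by omega)]

lemma map_pr {F' : Type*} [FunLike F' M N'] [MonoidHomClass F' M N'] (f : F') (s : ℕ → M)
    (i len : ℕ) : f (pr s i len) = pr (fun j => f (s j)) i len := by
  simp [pr, map_list_prod, List.map_map, Function.comp_def]

def cnj (c u : H) (i : ℕ) : H := c^i * u * (c^i)⁻¹

lemma cnj_zero (c u : H) : cnj c u 0 = u := by simp [cnj]

lemma cnj_succ (c u : H) (i : ℕ) : cnj c u (i+1) = c * cnj c u i * c⁻¹ := by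
  simp [cnj, pow_succ']; group

lemma shift_pow (u c : H) (p : ℕ) : u * (c*u)^p = (u*c)^p * u := by
  induction p with
  | zero => simp
  | succ q ih =>
      rw [pow_succ (c*u), ← mul_assoc, ih, pow_succ (u*c)]
      group

lemma pr_cnj (c u : H) (p : ℕ) : pr (cnj c u) 1 p = (c*u)^p * (c^p)⁻¹ := by
  induction p with
  | zero => simp
  | succ q ih =>
      rw [pr_succ, ih]
      show _ = (c*u)^(q+1) * (c^(q+1))⁻¹
      rw [cnj]
      rw [pow_succ (c*u), pow_succ c]
      group

lemma conj_pr_eq (u c : H) (p : ℕ) (hrel : (u*c)^(p+1) = (c*u)^(p+1)) :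
    (pr (cnj c u) 1 p)⁻¹ * u * pr (cnj c u) 1 p = cnj c u (p+1) := by
  rw [pr_cnj]
  have h1 : u * (c*u)^p = (c*u)^(p+1) * c⁻¹ := by
    rw [shift_pow, ← hrel, pow_succ]; group
  have : ((c*u)^p * (c^p)⁻¹)⁻¹ * u * ((c*u)^p * (c^p)⁻¹)
      = c^p * ((c*u)^p)⁻¹ * (u * (c*u)^p) * (c^p)⁻¹ := by group
  rw [this, h1, cnj, pow_succ c, pow_succ (c*u)]
  group

lemma map_altProd (f : M →* N') (x y : M) (j : ℕ) :
    f (altProd x y j) = altProd (f x) (f y) j := by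
  induction j generalizing x y with
  | zero => simp [altProd]
  | succ p ih => simp [altProd, ih]

lemma altProd_two_mul (x y : M) (p : ℕ) : altProd x y (2*p) = (x*y)^p := by
  induction p generalizing x y with
  | zero => simp [altProd]
  | succ q ih =>
      have : 2*(q+1) = (2*q + 1) + 1 := by ring
      rw [this]
      show x * altProd y x (2*q+1) = _
      show x * (y * altProd x y (2*q)) = _
      rw [ih, pow_succ']
      group


section Blocks

variable (k l : ℕ)

abbrev FF := FreeGroup (Fin k ⊕ Fin l)

def NA (i : ℕ) : FF k l := if h : i < k then .of (.inl ⟨i,h⟩) else 1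
def NB (j : ℕ) : FF k l := if h : j < l then .of (.inr ⟨j,h⟩) else 1

def sig : FF k l →* FF k l :=
  FreeGroup.lift (Sum.elim
    (fun i : Fin k => if (i:ℕ)+1 < k then NA k l ((i:ℕ)+1)
      else (pr (NA k l) 1 (k-1))⁻¹ * NA k l 0 * pr (NA k l) 1 (k-1))
    (fun j : Fin l => if (j:ℕ)+1 < l then NB k l ((j:ℕ)+1)
      else (pr (NB k l) 1 (l-1))⁻¹ * NB k l 0 * pr (NB k l) 1 (l-1)))

def tau : FF k l →* FF k l :=
  FreeGroup.lift (Sum.elim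
    (fun i : Fin k => if 0 < (i:ℕ) then NA k l ((i:ℕ)-1)
      else pr (NA k l) 0 (k-1) * NA k l (k-1) * (pr (NA k l) 0 (k-1))⁻¹)
    (fun j : Fin l => if 0 < (j:ℕ) then NB k l ((j:ℕ)-1)
      else pr (NB k l) 0 (l-1) * NB k l (l-1) * (pr (NB k l) 0 (l-1))⁻¹))

variable {k l}

lemma NA_def (i : ℕ) (h : i < k) : NA k l i = FreeGroup.of (.inl ⟨i,h⟩) := dif_pos h
lemma NB_def (j : ℕ) (h : j < l) : NB k l j = FreeGroup.of (.inr ⟨j,h⟩) := dif_pos h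

lemma sig_NA_lt {i : ℕ} (h : i+1 < k) : sig k l (NA k l i) = NA k l (i+1) := by
  rw [NA_def i (by omega), sig, FreeGroup.lift_apply_of, Sum.elim_inl, if_pos (by simpa only [Fin.val_mk] using h)]

lemma sig_NA_last (hk : 0 < k) :
    sig k l (NA k l (k-1)) = (pr (NA k l) 1 (k-1))⁻¹ * NA k l 0 * pr (NA k l) 1 (k-1) := by
  rw [NA_def (k-1) (by omega), sig, FreeGroup.lift_apply_of, Sum.elim_inl, if_neg (by simp only [Fin.val_mk]; omega)]

lemma tau_NA_pos {i : ℕ} (h0 : 0 < i) (h : i < k) : tau k l (NA k l i) = NA k l (i-1) := by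
  rw [NA_def i h, tau, FreeGroup.lift_apply_of, Sum.elim_inl, if_pos (by simpa only [Fin.val_mk] using h0)]

lemma tau_NA_zero (hk : 0 < k) :
    tau k l (NA k l 0) = pr (NA k l) 0 (k-1) * NA k l (k-1) * (pr (NA k l) 0 (k-1))⁻¹ := by
  rw [NA_def 0 hk, tau, FreeGroup.lift_apply_of, Sum.elim_inl, if_neg (by simp only [Fin.val_mk]; omega)]

lemma sig_NB_lt {j : ℕ} (h : j+1 < l) : sig k l (NB k l j) = NB k l (j+1) := by
  rw [NB_def j (by omega), sig, FreeGroup.lift_apply_of, Sum.elim_inr, if_pos (by simpa only [Fin.val_mk] using h)]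

lemma sig_NB_last (hl : 0 < l) :
    sig k l (NB k l (l-1)) = (pr (NB k l) 1 (l-1))⁻¹ * NB k l 0 * pr (NB k l) 1 (l-1) := by
  rw [NB_def (l-1) (by omega), sig, FreeGroup.lift_apply_of, Sum.elim_inr, if_neg (by simp only [Fin.val_mk]; omega)]

lemma tau_NB_pos {j : ℕ} (h0 : 0 < j) (h : j < l) : tau k l (NB k l j) = NB k l (j-1) := by
  rw [NB_def j h, tau, FreeGroup.lift_apply_of, Sum.elim_inr, if_pos (by simpa only [Fin.val_mk] using h0)]

lemma tau_NB_zero (hl : 0 < l) :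
    tau k l (NB k l 0) = pr (NB k l) 0 (l-1) * NB k l (l-1) * (pr (NB k l) 0 (l-1))⁻¹ := by
  rw [NB_def 0 hl, tau, FreeGroup.lift_apply_of, Sum.elim_inr, if_neg (by simp only [Fin.val_mk]; omega)]

lemma sig_pr_A : sig k l (pr (NA k l) 0 (k-1)) = pr (NA k l) 1 (k-1) := by
  rw [map_pr]
  exact pr_congr (fun j hj => by
    rw [Nat.zero_add, sig_NA_lt (by omega), Nat.add_comm 1 j])

lemma tau_pr_A : tau k l (pr (NA k l) 1 (k-1)) = pr (NA k l) 0 (k-1) := by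
  rw [map_pr]
  exact pr_congr (fun j hj => by
    rw [tau_NA_pos (by omega) (by omega), Nat.zero_add]
    congr 1; omega)

lemma sig_pr_B : sig k l (pr (NB k l) 0 (l-1)) = pr (NB k l) 1 (l-1) := by
  rw [map_pr]
  exact pr_congr (fun j hj => by
    rw [Nat.zero_add, sig_NB_lt (by omega), Nat.add_comm 1 j])

lemma tau_pr_B : tau k l (pr (NB k l) 1 (l-1)) = pr (NB k l) 0 (l-1) := by
  rw [map_pr]
  exact pr_congr (fun j hj => by
    rw [tau_NB_pos (by omega) (by omega), Nat.zero_add]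
    congr 1; omega)

lemma tau_sig (hk : 0 < k) (hl : 0 < l) :
    (tau k l).comp (sig k l) = MonoidHom.id _ := by
  apply FreeGroup.ext_hom
  rintro (i | j)
  · show tau k l (sig k l (FreeGroup.of (.inl i))) = _
    rw [← NA_def (i:ℕ) i.2]
    by_cases h : (i:ℕ)+1 < k
    · rw [sig_NA_lt h, tau_NA_pos (by omega) (by omega), Nat.add_sub_cancel, NA_def _ i.2]
      rfl
    · have hi : (i:ℕ) = k-1 := by omega
      rw [hi, sig_NA_last hk, map_mul, map_mul, map_inv, tau_pr_A, tau_NA_zero hk,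
        NA_def (k-1) (by omega)]
      show _ = FreeGroup.of (Sum.inl (⟨k-1, by omega⟩ : Fin k))
      group
  · show tau k l (sig k l (FreeGroup.of (.inr j))) = _
    rw [← NB_def (j:ℕ) j.2]
    by_cases h : (j:ℕ)+1 < l
    · rw [sig_NB_lt h, tau_NB_pos (by omega) (by omega), Nat.add_sub_cancel, NB_def _ j.2]
      rfl
    · have hj : (j:ℕ) = l-1 := by omega
      rw [hj, sig_NB_last hl, map_mul, map_mul, map_inv, tau_pr_B, tau_NB_zero hl,
        NB_def (l-1) (by omega)]
      show _ = FreeGroup.of (Sum.inr (⟨l-1, by omega⟩ : Fin l))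
      group

lemma sig_tau (hk : 0 < k) (hl : 0 < l) :
    (sig k l).comp (tau k l) = MonoidHom.id _ := by
  apply FreeGroup.ext_hom
  rintro (i | j)
  · show sig k l (tau k l (FreeGroup.of (.inl i))) = _
    rw [← NA_def (i:ℕ) i.2]
    by_cases h : 0 < (i:ℕ)
    · have h2 := i.2
      rw [tau_NA_pos h i.2, sig_NA_lt (by omega), show (i:ℕ)-1+1 = (i:ℕ) by omega,
        NA_def _ i.2]
      rfl
    · have hi : (i:ℕ) = 0 := by omega
      rw [hi, tau_NA_zero hk, map_mul, map_mul, map_inv, sig_pr_A, sig_NA_last hk,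
        NA_def 0 hk]
      show _ = FreeGroup.of (Sum.inl (⟨0, hk⟩ : Fin k))
      group
  · show sig k l (tau k l (FreeGroup.of (.inr j))) = _
    rw [← NB_def (j:ℕ) j.2]
    by_cases h : 0 < (j:ℕ)
    · have h2 := j.2
      rw [tau_NB_pos h j.2, sig_NB_lt (by omega), show (j:ℕ)-1+1 = (j:ℕ) by omega,
        NB_def _ j.2]
      rfl
    · have hj : (j:ℕ) = 0 := by omega
      rw [hj, tau_NB_zero hl, map_mul, map_mul, map_inv, sig_pr_B, sig_NB_last hl,
        NB_def 0 hl]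
      show _ = FreeGroup.of (Sum.inr (⟨0, hl⟩ : Fin l))
      group

end Blocks


section Aut

variable (k l : ℕ) (hk : 0 < k) (hl : 0 < l)

def sigE : FF k l ≃* FF k l :=
  MonoidHom.toMulEquiv (sig k l) (tau k l) (tau_sig hk hl) (sig_tau hk hl)

def sigAut : MulAut (FF k l) := sigE k l hk hl

lemma sigAut_apply (x : FF k l) : sigAut k l hk hl x = sig k l x := rfl

lemma sigAut_pow_A : ∀ i, i < k → ((sigAut k l hk hl)^i) (NA k l 0) = NA k l i := by
  intro i
  induction i with
  | zero => intro _; simp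
  | succ p ih =>
      intro hp
      rw [pow_succ', MulAut.mul_apply, ih (by omega), sigAut_apply, sig_NA_lt hp]

lemma sigAut_pow_B : ∀ j, j < l → ((sigAut k l hk hl)^j) (NB k l 0) = NB k l j := by
  intro j
  induction j with
  | zero => intro _; simp
  | succ p ih =>
      intro hp
      rw [pow_succ', MulAut.mul_apply, ih (by omega), sigAut_apply, sig_NB_lt hp]

def theta : Multiplicative ℤ →* MulAut (FF k l) := zpowersHom _ (sigAut k l hk hl)

abbrev P := (FF k l) ⋊[theta k l hk hl] Multiplicative ℤ

lemma sdp_pow {N G : Type*} [Group N] [Group G] {φ : G →* MulAut N} (x : N) (g : G) :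
    ∀ j : ℕ, (⟨x, g⟩ : N ⋊[φ] G)^j = ⟨pr (fun i => φ (g^i) x) 0 j, g^j⟩
  | 0 => by ext <;> simp [pr_zero]
  | (j+1) => by
      rw [pow_succ', sdp_pow x g j, SemidirectProduct.mul_def]
      congr 1
      · show x * (φ g) (pr (fun i => φ (g^i) x) 0 j) = _
        rw [map_pr (φ g), pr_cons]
        congr 1
        · simp
        · exact pr_congr (fun j' hj' => by
            show (φ g) ((φ (g ^ (0 + j'))) x) = (φ (g ^ (1 + j'))) x
            rw [Nat.zero_add, ← MulAut.mul_apply, ← map_mul, ← pow_succ', Nat.add_comm])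
      · rw [pow_succ']

lemma claimA0 : pr (fun i => ((sigAut k l hk hl)^i) (NA k l 0)) 0 k = pr (NA k l) 0 k :=
  pr_congr (fun j hj => by simpa using sigAut_pow_A k l hk hl j hj)

lemma claimB0 : pr (fun j => ((sigAut k l hk hl)^j) (NB k l 0)) 0 l = pr (NB k l) 0 l :=
  pr_congr (fun j hj => by simpa using sigAut_pow_B k l hk hl j hj)

lemma claimA1 : pr (fun i => ((sigAut k l hk hl)^(i+1)) (NA k l 0)) 0 k = pr (NA k l) 0 k := by
  obtain ⟨p, rfl⟩ : ∃ p, k = p + 1 := ⟨k-1, by omega⟩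
  rw [pr_succ, pr_cons]
  have h1 : pr (fun i => ((sigAut (p+1) l hk hl)^(i+1)) (NA (p+1) l 0)) 0 p
      = pr (NA (p+1) l) 1 p :=
    pr_congr (fun j hj => by
      have := sigAut_pow_A (p+1) l hk hl (j+1) (by omega)
      simpa [Nat.add_comm 1 j] using this)
  have h2 : ((sigAut (p+1) l hk hl)^(0+p+1)) (NA (p+1) l 0)
      = (pr (NA (p+1) l) 1 p)⁻¹ * NA (p+1) l 0 * pr (NA (p+1) l) 1 p := by
    rw [Nat.zero_add, pow_succ', MulAut.mul_apply, sigAut_pow_A (p+1) l hk hl p (by omega),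
      sigAut_apply]
    have := sig_NA_last (k := p+1) (l := l) hk
    simpa [Nat.add_sub_cancel] using this
  rw [h1, h2]
  group

lemma claimB1 : pr (fun j => ((sigAut k l hk hl)^(j+1)) (NB k l 0)) 0 l = pr (NB k l) 0 l := by
  obtain ⟨p, rfl⟩ : ∃ p, l = p + 1 := ⟨l-1, by omega⟩
  rw [pr_succ, pr_cons]
  have h1 : pr (fun i => ((sigAut k (p+1) hk hl)^(i+1)) (NB k (p+1) 0)) 0 p
      = pr (NB k (p+1)) 1 p :=
    pr_congr (fun j hj => by
      have := sigAut_pow_B k (p+1) hk hl (j+1) (by omega)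
      simpa [Nat.add_comm 1 j] using this)
  have h2 : ((sigAut k (p+1) hk hl)^(0+p+1)) (NB k (p+1) 0)
      = (pr (NB k (p+1)) 1 p)⁻¹ * NB k (p+1) 0 * pr (NB k (p+1)) 1 p := by
    rw [Nat.zero_add, pow_succ', MulAut.mul_apply, sigAut_pow_B k (p+1) hk hl p (by omega),
      sigAut_apply]
    have := sig_NB_last (k := k) (l := p+1) hl
    simpa [Nat.add_sub_cancel] using this
  rw [h1, h2]
  group

end Aut


section Presented

variable (k l : ℕ) (hk : 0 < k) (hl : 0 < l)

abbrev GG := TwoEdgeTreeArtin (2*k) (2*l)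

def rls : Set (FreeGroup (Fin 3)) :=
  {altProd (FreeGroup.of (0 : Fin 3)) (FreeGroup.of 1) (2*k) *
      (altProd (FreeGroup.of (1 : Fin 3)) (FreeGroup.of 0) (2*k))⁻¹,
    altProd (FreeGroup.of (1 : Fin 3)) (FreeGroup.of 2) (2*l) *
      (altProd (FreeGroup.of (2 : Fin 3)) (FreeGroup.of 1) (2*l))⁻¹}

def x0 : GG k l := PresentedGroup.of 0
def x1 : GG k l := PresentedGroup.of 1
def x2 : GG k l := PresentedGroup.of 2

lemma mk_rel {r : FreeGroup (Fin 3)} (hr : r ∈ rls k l) :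
    PresentedGroup.mk (rls k l) r = 1 :=
  (QuotientGroup.eq_one_iff _).mpr (Subgroup.subset_normalClosure hr)

lemma relA : (x0 k l * x1 k l)^k = (x1 k l * x0 k l)^k := by
  have h := mk_rel k l (Set.mem_insert _ _)
  rw [map_mul, map_inv, map_altProd, map_altProd, altProd_two_mul, altProd_two_mul,
    mul_inv_eq_one] at h
  exact h

lemma relB : (x1 k l * x2 k l)^l = (x2 k l * x1 k l)^l := by
  have h := mk_rel k l (Set.mem_insert_iff.mpr (Or.inr rfl))
  rw [map_mul, map_inv, map_altProd, map_altProd, altProd_two_mul, altProd_two_mul,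
    mul_inv_eq_one] at h
  exact h

def psiF : Fin 3 → P k l hk hl := fun i =>
  match i with
  | 0 => SemidirectProduct.inl (NA k l 0)
  | 1 => SemidirectProduct.inr (Multiplicative.ofAdd 1)
  | 2 => SemidirectProduct.inl (NB k l 0)

lemma theta_ofAdd_one : theta k l hk hl (Multiplicative.ofAdd 1) = sigAut k l hk hl := by
  simp [theta, zpowersHom_apply]

lemma theta_pow (i : ℕ) :
    theta k l hk hl ((Multiplicative.ofAdd (1:ℤ))^i) = (sigAut k l hk hl)^i := by
  rw [map_pow, theta_ofAdd_one]

lemma inr_mul_inl (x : FF k l) (g : Multiplicative ℤ) :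
    (SemidirectProduct.inr g * SemidirectProduct.inl x : P k l hk hl)
      = ⟨theta k l hk hl g x, g⟩ := by
  ext <;> simp

lemma hrels : ∀ r ∈ rls k l, FreeGroup.lift (psiF k l hk hl) r = 1 := by
  intro r hr
  rcases Set.mem_insert_iff.mp hr with rfl | hr2
  · rw [map_mul, map_inv, map_altProd, map_altProd, FreeGroup.lift_apply_of, FreeGroup.lift_apply_of,
      altProd_two_mul, altProd_two_mul, mul_inv_eq_one]
    show (SemidirectProduct.inl (NA k l 0) * SemidirectProduct.inr (Multiplicative.ofAdd 1))^k
      = (SemidirectProduct.inr (Multiplicative.ofAdd 1) * SemidirectProduct.inl (NA k l 0))^k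
    rw [← SemidirectProduct.mk_eq_inl_mul_inr, inr_mul_inl, sdp_pow, sdp_pow]
    congr 1
    · rw [theta_ofAdd_one]
      calc pr (fun i => theta k l hk hl (Multiplicative.ofAdd 1 ^ i) (NA k l 0)) 0 k
          = pr (fun i => ((sigAut k l hk hl)^i) (NA k l 0)) 0 k :=
            pr_congr (fun j hj => by rw [theta_pow])
        _ = pr (NA k l) 0 k := claimA0 k l hk hl
        _ = pr (fun i => ((sigAut k l hk hl)^(i+1)) (NA k l 0)) 0 k :=
            (claimA1 k l hk hl).symm
        _ = pr (fun i => theta k l hk hl (Multiplicative.ofAdd 1 ^ i)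
              ((sigAut k l hk hl) (NA k l 0))) 0 k :=
            pr_congr (fun j hj => by
              rw [theta_pow, ← MulAut.mul_apply, ← pow_succ])
  · rw [Set.mem_singleton_iff.mp hr2]
    rw [map_mul, map_inv, map_altProd, map_altProd, FreeGroup.lift_apply_of, FreeGroup.lift_apply_of,
      altProd_two_mul, altProd_two_mul, mul_inv_eq_one]
    show (SemidirectProduct.inr (Multiplicative.ofAdd 1) * SemidirectProduct.inl (NB k l 0))^l
      = (SemidirectProduct.inl (NB k l 0) * SemidirectProduct.inr (Multiplicative.ofAdd 1))^l
    rw [← SemidirectProduct.mk_eq_inl_mul_inr, inr_mul_inl, sdp_pow, sdp_pow]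
    congr 1
    · rw [theta_ofAdd_one]
      calc pr (fun i => theta k l hk hl (Multiplicative.ofAdd 1 ^ i)
              ((sigAut k l hk hl) (NB k l 0))) 0 l
          = pr (fun i => ((sigAut k l hk hl)^(i+1)) (NB k l 0)) 0 l :=
            pr_congr (fun j hj => by
              rw [theta_pow, ← MulAut.mul_apply, ← pow_succ])
        _ = pr (NB k l) 0 l := claimB1 k l hk hl
        _ = pr (fun i => ((sigAut k l hk hl)^i) (NB k l 0)) 0 l := (claimB0 k l hk hl).symm
        _ = pr (fun i => theta k l hk hl (Multiplicative.ofAdd 1 ^ i) (NB k l 0)) 0 l :=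
            pr_congr (fun j hj => by rw [theta_pow])

def psi : GG k l →* P k l hk hl := PresentedGroup.toGroup (hrels k l hk hl)

lemma psi_x0 : psi k l hk hl (x0 k l) = SemidirectProduct.inl (NA k l 0) :=
  PresentedGroup.toGroup.of _
lemma psi_x1 : psi k l hk hl (x1 k l) = SemidirectProduct.inr (Multiplicative.ofAdd 1) :=
  PresentedGroup.toGroup.of _
lemma psi_x2 : psi k l hk hl (x2 k l) = SemidirectProduct.inl (NB k l 0) :=
  PresentedGroup.toGroup.of _


def chiF : FF k l →* GG k l :=
  FreeGroup.lift (Sum.elim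
    (fun i : Fin k => cnj (x1 k l) (x0 k l) (i:ℕ))
    (fun j : Fin l => cnj (x1 k l) (x2 k l) (j:ℕ)))

lemma chiF_NA {i : ℕ} (h : i < k) : chiF k l (NA k l i) = cnj (x1 k l) (x0 k l) i := by
  rw [NA_def i h, chiF, FreeGroup.lift_apply_of, Sum.elim_inl]

lemma chiF_NB {j : ℕ} (h : j < l) : chiF k l (NB k l j) = cnj (x1 k l) (x2 k l) j := by
  rw [NB_def j h, chiF, FreeGroup.lift_apply_of, Sum.elim_inr]

lemma chiF_pr_A : chiF k l (pr (NA k l) 1 (k-1)) = pr (cnj (x1 k l) (x0 k l)) 1 (k-1) := by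
  rw [map_pr]
  exact pr_congr (fun j hj => by rw [chiF_NA k l (by omega)])

lemma chiF_pr_B : chiF k l (pr (NB k l) 1 (l-1)) = pr (cnj (x1 k l) (x2 k l)) 1 (l-1) := by
  rw [map_pr]
  exact pr_congr (fun j hj => by rw [chiF_NB k l (by omega)])

include hk in
lemma relA' : (x0 k l * x1 k l)^((k-1)+1) = (x1 k l * x0 k l)^((k-1)+1) := by
  have : (k-1)+1 = k := by omega
  rw [this]; exact relA k l

include hl in
lemma relB' : (x1 k l * x2 k l)^((l-1)+1) = (x2 k l * x1 k l)^((l-1)+1) := by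
  have : (l-1)+1 = l := by omega
  rw [this]; exact relB k l

include hk hl in
lemma chiF_sig (x : FF k l) :
    chiF k l (sig k l x) = x1 k l * chiF k l x * (x1 k l)⁻¹ := by
  have h : (chiF k l).comp (sig k l)
      = (MulAut.conj (x1 k l)).toMonoidHom.comp (chiF k l) := by
    apply FreeGroup.ext_hom
    rintro (i | j)
    · show chiF k l (sig k l (FreeGroup.of (Sum.inl i)))
        = MulAut.conj (x1 k l) (chiF k l (FreeGroup.of (Sum.inl i)))
      rw [← NA_def (i:ℕ) i.2, MulAut.conj_apply, chiF_NA k l i.2]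
      by_cases h : (i:ℕ)+1 < k
      · rw [sig_NA_lt h, chiF_NA k l (by omega), cnj_succ]
      · have hi : (i:ℕ) = k-1 := by have := i.2; omega
        rw [hi, sig_NA_last hk, map_mul, map_mul, map_inv, chiF_pr_A, chiF_NA k l hk,
          cnj_zero, conj_pr_eq _ _ _ (relA' k l hk), cnj_succ]
    · show chiF k l (sig k l (FreeGroup.of (Sum.inr j)))
        = MulAut.conj (x1 k l) (chiF k l (FreeGroup.of (Sum.inr j)))
      rw [← NB_def (j:ℕ) j.2, MulAut.conj_apply, chiF_NB k l j.2]
      by_cases h : (j:ℕ)+1 < l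
      · rw [sig_NB_lt h, chiF_NB k l (by omega), cnj_succ]
      · have hj : (j:ℕ) = l-1 := by have := j.2; omega
        rw [hj, sig_NB_last hl, map_mul, map_mul, map_inv, chiF_pr_B, chiF_NB k l hl,
          cnj_zero, conj_pr_eq _ _ _ (relB' k l hl).symm, cnj_succ]
  simpa [MulAut.conj_apply] using DFunLike.congr_fun h x

include hk hl in
lemma chiF_tau (x : FF k l) :
    chiF k l (tau k l x) = (x1 k l)⁻¹ * chiF k l x * x1 k l := by
  have h0 : sig k l (tau k l x) = x := DFunLike.congr_fun (sig_tau hk hl) x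
  have := chiF_sig k l hk hl (tau k l x)
  rw [h0] at this
  rw [this]
  group

lemma chiF_sigAut_zpow : ∀ (d : ℤ) (x : FF k l),
    chiF k l (((sigAut k l hk hl)^d : MulAut (FF k l)) x)
      = (x1 k l)^d * chiF k l x * ((x1 k l)^d)⁻¹ := by
  intro d
  induction d using Int.induction_on with
  | zero => intro x; simp
  | succ d ih =>
      intro x
      have : ((sigAut k l hk hl)^((d:ℤ)+1) : MulAut (FF k l)) x
          = ((sigAut k l hk hl)^(d:ℤ) : MulAut (FF k l)) (sig k l x) := by
        rw [zpow_add, zpow_one, MulAut.mul_apply]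
        rfl
      rw [this, ih, chiF_sig k l hk hl, zpow_add, zpow_one]
      group
  | pred d ih =>
      intro x
      have : ((sigAut k l hk hl)^(-(d:ℤ)-1) : MulAut (FF k l)) x
          = ((sigAut k l hk hl)^(-(d:ℤ)) : MulAut (FF k l)) (tau k l x) := by
        rw [sub_eq_add_neg, zpow_add, MulAut.mul_apply]
        congr 1
      rw [this, ih, chiF_tau k l hk hl, sub_eq_add_neg, zpow_add, zpow_neg_one]
      group

def chiZ : Multiplicative ℤ →* GG k l := zpowersHom _ (x1 k l)

lemma hcond : ∀ g : Multiplicative ℤ,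
    (chiF k l).comp ((theta k l hk hl) g).toMonoidHom
      = (MulAut.conj (chiZ k l g)).toMonoidHom.comp (chiF k l) := by
  intro g
  ext x
  have h1 : theta k l hk hl g = (sigAut k l hk hl)^(g.toAdd) := by
    rw [theta, zpowersHom_apply]
  simp only [MonoidHom.comp_apply, MulEquiv.coe_toMonoidHom, MulAut.conj_apply, h1]
  rw [chiF_sigAut_zpow k l hk hl]
  rfl

def chi : P k l hk hl →* GG k l :=
  SemidirectProduct.lift (chiF k l) (chiZ k l) (hcond k l hk hl)


lemma map_cnj {H1 H2 : Type*} [Group H1] [Group H2] (f : H1 →* H2) (c u : H1) (i : ℕ) :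
    f (cnj c u i) = cnj (f c) (f u) i := by
  simp [cnj]

lemma chi_psi : (chi k l hk hl).comp (psi k l hk hl) = MonoidHom.id _ := by
  apply PresentedGroup.ext
  intro x
  fin_cases x
  · show chi k l hk hl (psi k l hk hl (x0 k l)) = x0 k l
    rw [psi_x0, chi, SemidirectProduct.lift_inl, chiF_NA k l hk, cnj_zero]
  · show chi k l hk hl (psi k l hk hl (x1 k l)) = x1 k l
    rw [psi_x1, chi, SemidirectProduct.lift_inr]
    simp [chiZ, zpowersHom_apply]
  · show chi k l hk hl (psi k l hk hl (x2 k l)) = x2 k l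
    rw [psi_x2, chi, SemidirectProduct.lift_inl, chiF_NB k l hl, cnj_zero]

lemma chi_psi_apply (g : GG k l) : chi k l hk hl (psi k l hk hl g) = g :=
  DFunLike.congr_fun (chi_psi k l hk hl) g

lemma psi_chi : (psi k l hk hl).comp (chi k l hk hl) = MonoidHom.id _ := by
  apply SemidirectProduct.hom_ext
  · apply FreeGroup.ext_hom
    rintro (i | j)
    · show psi k l hk hl (chi k l hk hl (SemidirectProduct.inl (FreeGroup.of (Sum.inl i))))
        = SemidirectProduct.inl (FreeGroup.of (Sum.inl i))
      rw [chi, SemidirectProduct.lift_inl, chiF, FreeGroup.lift_apply_of, Sum.elim_inl,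
        map_cnj, psi_x0, psi_x1]
      rw [cnj, ← map_pow, ← map_inv, ← SemidirectProduct.inl_aut, theta_pow,
        sigAut_pow_A k l hk hl _ i.2, NA_def _ i.2]
    · show psi k l hk hl (chi k l hk hl (SemidirectProduct.inl (FreeGroup.of (Sum.inr j))))
        = SemidirectProduct.inl (FreeGroup.of (Sum.inr j))
      rw [chi, SemidirectProduct.lift_inl, chiF, FreeGroup.lift_apply_of, Sum.elim_inr,
        map_cnj, psi_x2, psi_x1]
      rw [cnj, ← map_pow, ← map_inv, ← SemidirectProduct.inl_aut, theta_pow,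
        sigAut_pow_B k l hk hl _ j.2, NB_def _ j.2]
  · apply MonoidHom.ext_mint
    show psi k l hk hl (chi k l hk hl (SemidirectProduct.inr (Multiplicative.ofAdd 1)))
      = SemidirectProduct.inr (Multiplicative.ofAdd 1)
    rw [chi, SemidirectProduct.lift_inr]
    have : chiZ k l (Multiplicative.ofAdd 1) = x1 k l := by
      simp [chiZ, zpowersHom_apply]
    rw [this, psi_x1]

lemma psi_chi_apply (p : P k l hk hl) : psi k l hk hl (chi k l hk hl p) = p :=
  DFunLike.congr_fun (psi_chi k l hk hl) p

def Phi : GG k l →* Multiplicative ℤ :=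
  SemidirectProduct.rightHom.comp (psi k l hk hl)

lemma Phi_surjective : Function.Surjective (Phi k l hk hl) := by
  intro z
  refine ⟨chi k l hk hl (SemidirectProduct.inr z), ?_⟩
  show SemidirectProduct.rightHom (psi k l hk hl (chi k l hk hl (SemidirectProduct.inr z))) = z
  rw [psi_chi_apply, SemidirectProduct.rightHom_inr]

def KK : Subgroup (GG k l) := (Phi k l hk hl).ker

lemma psi_right {g : GG k l} (hg : g ∈ KK k l hk hl) : (psi k l hk hl g).right = 1 := hg

def fOne : (KK k l hk hl) →* FF k l where
  toFun g := (psi k l hk hl g.1).left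
  map_one' := by simp
  map_mul' a b := by
    show (psi k l hk hl (a.1 * b.1)).left = _
    rw [map_mul, SemidirectProduct.mul_left, psi_right k l hk hl a.2, map_one,
      MulAut.one_apply]

include hk hl in
theorem mainNPF : IsNormallyPolyFree (GG k l) := by
  refine ⟨2, fun i => match i with
      | 0 => ⊥
      | 1 => KK k l hk hl
      | 2 => ⊤, rfl, rfl, ?_, ?_, ?_⟩
  · intro i
    fin_cases i
    · exact bot_le
    · exact le_top
  · intro i
    fin_cases i
    · exact inferInstance
    · exact MonoidHom.normal_ker _
    · exact inferInstance
  · intro i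
    fin_cases i
    · refine ⟨FF k l, inferInstance, fOne k l hk hl, inferInstance, ?_, ?_⟩
      · intro x
        have hmem : chi k l hk hl (SemidirectProduct.inl x) ∈ KK k l hk hl := by
          show SemidirectProduct.rightHom
            (psi k l hk hl (chi k l hk hl (SemidirectProduct.inl x))) = 1
          rw [psi_chi_apply, SemidirectProduct.rightHom_inl]
        refine ⟨⟨chi k l hk hl (SemidirectProduct.inl x), hmem⟩, ?_⟩
        show (psi k l hk hl (chi k l hk hl (SemidirectProduct.inl x))).left = x
        rw [psi_chi_apply, SemidirectProduct.left_inl]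
      · ext g
        constructor
        · intro hgk
          have h1 : (psi k l hk hl g.1).left = 1 := hgk
          have h2 : (psi k l hk hl g.1).right = 1 := psi_right k l hk hl g.2
          have h3 : psi k l hk hl g.1 = 1 := SemidirectProduct.ext h1 h2
          have h4 : g.1 = 1 := by
            have := chi_psi_apply k l hk hl g.1
            rw [h3, map_one] at this
            exact this.symm
          show g.1 ∈ (⊥ : Subgroup (GG k l))
          simpa using h4
        · intro hg
          have h4 : g.1 = 1 := by simpa using (Subgroup.mem_subgroupOf.mp hg)
          show (psi k l hk hl g.1).left = 1
          rw [h4, map_one]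
          rfl
    · refine ⟨Multiplicative ℤ, inferInstance,
        (Phi k l hk hl).comp (Subgroup.subtype ⊤), mzFree, ?_, ?_⟩
      · intro z
        obtain ⟨g, hg⟩ := Phi_surjective k l hk hl z
        exact ⟨⟨g, trivial⟩, hg⟩
      · ext g
        show Phi k l hk hl g.1 = 1 ↔ _
        rw [Subgroup.mem_subgroupOf]
        exact Iff.rfl

end Presented

end NPF

/-- Let `A_(I_m)` and `A_(I_n)` be dihedral Artin groups with even labels `m` and
`n` and let `A_Γ = A_(I_m) ∗_⟨w⟩ A_(I_n)` be the Artin group of the tree consisting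
of the two corresponding edges sharing the vertex `w`. Then `A_Γ` is normally
poly-free. -/


theorem twoEdgeTreeArtin_isNormallyPolyFree (m n : ℕ) (hm : 2 ≤ m) (hn : 2 ≤ n)
    (hme : Even m) (hne : Even n) :
    IsNormallyPolyFree (TwoEdgeTreeArtin m n) := by
  obtain ⟨a, rfl⟩ := hme
  obtain ⟨b, rfl⟩ := hne
  rw [show a + a = 2*a from (two_mul a).symm, show b + b = 2*b from (two_mul b).symm]
  exact NPF.mainNPF a b (by omega) (by omega)
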